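/- arXiv:math/0210223 — 5 statements merged into one kernel-verified Lean document; each statement's English description precedes it below -/
import Mathlib

section
/- Let p be a prime, let K ≥ −1 be an integer, and set e = 1/p^{K+1}. Then for every positive integer i, the rational number e·i + K − τ(i) is nonnegative. -/
/-- `τ̄(n)`: the sum of the base-`p` digits of `n - 1` (so `τ̄(1) = 0`). -/
def taubar (p n : ℕ) : ℕ := (Nat.digits p (n - 1)).sum

/-- `τ(n) = τ̄(n)/(p-1)` as a rational number. -/
def tau (p n : ℕ) : ℚ := (taubar p n : ℚ) / ((p : ℚ) - 1)

lemma tau_aux (p : ℕ) (hp : 2 ≤ p) :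
    ∀ k m : ℕ, ((Nat.digits p m).sum : ℚ) * (p : ℚ) ^ k ≤
      ((p : ℚ) - 1) * (((k : ℚ) - 1) * (p : ℚ) ^ k + m + 1) := by
  intro k
  induction k with
  | zero =>
    intro m
    have hs : ((Nat.digits p m).sum : ℚ) ≤ m := by
      exact_mod_cast Nat.digit_sum_le p m
    have hp' : (2 : ℚ) ≤ p := by exact_mod_cast hp
    have hm0 : (0 : ℚ) ≤ m := by positivity
    nlinarith [hs, hp', hm0]
  | succ k ih =>
    intro m
    have hp' : (2 : ℚ) ≤ p := by exact_mod_cast hp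
    have hP : (0 : ℚ) < (p : ℚ) ^ k := by positivity
    rcases Nat.eq_zero_or_pos m with rfl | hm
    · have hk0 : (0 : ℚ) ≤ (k : ℚ) := by positivity
      simp only [Nat.digits_zero, List.sum_nil, Nat.cast_zero, zero_mul]
      push_cast
      have h0 : (0:ℚ) ≤ ((p:ℚ)-1) * ((k:ℚ)*(p:ℚ)^(k+1)+1) :=
        mul_nonneg (by linarith) (by positivity)
      nlinarith [h0]
    · rw [Nat.digits_def' (by omega : 1 < p) hm]
      set q := m / p with hqdef
      set r := m % p with hrdef
      have hdm : p * q + r = m := Nat.div_add_mod m p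
      have hrlt : r < p := Nat.mod_lt _ (by omega)
      have hq := ih q
      have hr' : ((r : ℚ)) < p := by exact_mod_cast hrlt
      have hdm' : (p : ℚ) * (q : ℚ) + (r : ℚ) = m := by exact_mod_cast hdm
      have hrn : (0 : ℚ) ≤ (r : ℚ) := by positivity
      have hkey : ((r : ℚ) + 1 - p) * ((p : ℚ) ^ k * p) ≤
          ((r : ℚ) + 1 - p) * ((p : ℚ) - 1) := by
        have hr1 : (r:ℚ) + 1 ≤ p := by exact_mod_cast hrlt
        apply mul_le_mul_of_nonpos_left _ (by linarith)
        calc (p : ℚ) - 1 ≤ (p : ℚ) := by linarith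
        _ = 1 * (p : ℚ) := (one_mul _).symm
        _ ≤ (p : ℚ) ^ k * p := by
            apply mul_le_mul_of_nonneg_right _ (by linarith)
            exact one_le_pow₀ (by linarith)
      have hq' := mul_le_mul_of_nonneg_left hq (by linarith : (0:ℚ) ≤ (p:ℚ))
      rw [pow_succ]
      rw [List.sum_cons, Nat.cast_add, Nat.cast_add, Nat.cast_one]
      nlinarith [hq', hkey]

/-- Lemma 1.7. For `K ≥ -1` and `e = 1/p^(K+1)`, one has
`e·i + K - τ(i) ≥ 0` for every positive integer `i`. -/
theorem tau_le_linear (p : ℕ) (hp : p.Prime) (K : ℤ) (hK : -1 ≤ K)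
    (e : ℚ) (he : e = 1 / (p : ℚ) ^ (K + 1)) :
    ∀ i : ℕ, 0 < i → 0 ≤ e * (i : ℚ) + (K : ℚ) - tau p i := by
  intro i hi
  set k := (K + 1).toNat with hkdef
  have hk : (k : ℤ) = K + 1 := Int.toNat_of_nonneg (by omega)
  have hp2 : 2 ≤ p := hp.two_le
  have hpQ : (2 : ℚ) ≤ p := by exact_mod_cast hp2
  have h1 : (0 : ℚ) < (p : ℚ) - 1 := by linarith
  have h2 : (0 : ℚ) < (p : ℚ) ^ k := by positivity
  have hz : (p : ℚ) ^ (K + 1) = (p : ℚ) ^ k := by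
    rw [← hk, zpow_natCast]
  have keyQ := tau_aux p hp2 k (i - 1)
  have hi1 : ((i - 1 : ℕ) : ℚ) + 1 = i := by
    have : i - 1 + 1 = i := by omega
    exact_mod_cast this
  have hKk : (K : ℚ) = (k : ℚ) - 1 := by
    have : (K : ℚ) = ((k : ℤ) : ℚ) - 1 := by rw [hk]; push_cast; ring
    simpa using this
  rw [sub_nonneg, he, tau, taubar, hz, hKk, div_le_iff₀ h1, ← mul_le_mul_iff_of_pos_right h2]
  calc ((Nat.digits p (i - 1)).sum : ℚ) * (p : ℚ) ^ k
      ≤ ((p : ℚ) - 1) * (((k : ℚ) - 1) * (p : ℚ) ^ k + ((i - 1 : ℕ) : ℚ) + 1) := keyQ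
    _ = (1 / (p:ℚ)^k * i + ((k:ℚ) - 1)) * ((p:ℚ) - 1) * (p:ℚ)^k := by
        rw [← hi1]; field_simp; ring
end

section
/- Let S be a commutative integral domain containing the rational numbers, suppose z = a·x + b·y with a, b, x, y ∈ S, and let n be a positive integer. Suppose a_0 = 1 and a_1, …, a_{k−1} ∈ S have been chosen with k ≤ n so that Σ_{j=0}^i C(n−j, i−j)·a_j·z^{i−j}·x^j ∈ y^i·S for i = 1, …, k−1. Then there exists a_k ∈ S such that Σ_{j=0}^k C(n−j, k−j)·a_j·z^{k−j}·x^j ∈ y^k·S. -/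
open Finset

private lemma tri_filter {i p : ℕ} (hp : p ≤ i) :
    (Finset.range (i+1)).filter (fun m => p + m ≤ i) = Finset.range (i - p + 1) := by
  ext m; simp only [Finset.mem_filter, Finset.mem_range]; omega

private lemma tri_swap {M : Type*} [AddCommMonoid M] (i : ℕ) (f : ℕ → ℕ → M) :
    ∑ j ∈ Finset.range (i+1), ∑ m ∈ Finset.range (i - j + 1), f j m
      = ∑ m ∈ Finset.range (i+1), ∑ j ∈ Finset.range (i - m + 1), f j m := by
  calc ∑ j ∈ Finset.range (i+1), ∑ m ∈ Finset.range (i - j + 1), f j m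
      = ∑ j ∈ Finset.range (i+1), ∑ m ∈ Finset.range (i+1),
          if j + m ≤ i then f j m else 0 := by
        refine Finset.sum_congr rfl fun j hj => ?_
        rw [Finset.mem_range] at hj
        rw [← tri_filter (by omega : j ≤ i), Finset.sum_filter]
    _ = ∑ m ∈ Finset.range (i+1), ∑ j ∈ Finset.range (i+1),
          if j + m ≤ i then f j m else 0 := Finset.sum_comm
    _ = ∑ m ∈ Finset.range (i+1), ∑ j ∈ Finset.range (i - m + 1), f j m := by
        refine Finset.sum_congr rfl fun m hm => ?_
        rw [Finset.mem_range] at hm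
        rw [← tri_filter (by omega : m ≤ i), Finset.sum_filter]
        refine Finset.sum_congr rfl fun j _ => by rw [Nat.add_comm j m]

private lemma choose_tri {N r m : ℕ} (hm : m ≤ r) (hr : r ≤ N) :
    N.choose r * r.choose m = N.choose (r - m) * (N - (r - m)).choose m := by
  have h1 : r.choose (r - m) = r.choose m := Nat.choose_symm hm
  have h2 : N.choose r * r.choose (r - m) = N.choose (r - m) * (N - (r - m)).choose (r - (r - m)) :=
    Nat.choose_mul (Nat.sub_le r m)
  rw [h1] at h2
  rw [h2]
  have h3 : r - (r - m) = m := by omega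
  rw [h3]

/-- The key identity: expanding `(w+v)^(i-j)` and regrouping. -/
private lemma key_identity {S : Type*} [CommRing S] (x w v : S) (n : ℕ) (c : ℕ → S)
    (i : ℕ) (hi : i ≤ n) :
    ∑ j ∈ Finset.range (i+1), (Nat.choose (n-j) (i-j) : S) * c j * (w+v)^(i-j) * x^j
      = ∑ m ∈ Finset.range (i+1), (Nat.choose (n-i+m) m : S) * v^m *
          ∑ j ∈ Finset.range (i-m+1), (Nat.choose (n-j) (i-m-j) : S) * c j * w^(i-m-j) * x^j := by
  have expand : ∀ j ∈ Finset.range (i+1),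
      (Nat.choose (n-j) (i-j) : S) * c j * (w+v)^(i-j) * x^j
        = ∑ m ∈ Finset.range (i-j+1),
            (Nat.choose (n-i+m) m : S) * v^m *
              ((Nat.choose (n-j) (i-m-j) : S) * c j * w^(i-m-j) * x^j) := by
    intro j hj
    rw [Finset.mem_range] at hj
    have hj' : j ≤ i := by omega
    have hwv : w + v = v + w := add_comm w v
    rw [hwv, add_pow, Finset.mul_sum, Finset.sum_mul]
    refine Finset.sum_congr rfl fun m hm => ?_
    rw [Finset.mem_range] at hm
    have hm' : m ≤ i - j := by omega
    have hcc : (n-j).choose (i-j) * (i-j).choose m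
        = (n-j).choose (i-m-j) * (n-i+m).choose m := by
      have h := choose_tri (N := n-j) (r := i-j) (m := m) hm' (by omega)
      rw [h]
      have e1 : i - j - m = i - m - j := by omega
      rw [e1]
      have e2 : n - j - (i - m - j) = n - i + m := by omega
      rw [e2]
    have hccS : ((n-j).choose (i-j) : S) * ((i-j).choose m : S)
        = ((n-j).choose (i-m-j) : S) * ((n-i+m).choose m : S) := by
      exact_mod_cast congrArg (Nat.cast (R := S)) hcc
    have e1 : i - j - m = i - m - j := by omega
    calc (Nat.choose (n-j) (i-j) : S) * c j * (v^m * w^(i-j-m) * ((i-j).choose m : S)) * x^j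
        = ((n-j).choose (i-j) : S) * ((i-j).choose m : S) * (c j * v^m * w^(i-j-m) * x^j) := by
          ring
      _ = ((n-j).choose (i-m-j) : S) * ((n-i+m).choose m : S) * (c j * v^m * w^(i-m-j) * x^j) := by
          rw [hccS, e1]
      _ = (Nat.choose (n-i+m) m : S) * v^m *
            ((Nat.choose (n-j) (i-m-j) : S) * c j * w^(i-m-j) * x^j) := by ring
  rw [Finset.sum_congr rfl expand, tri_swap]
  refine Finset.sum_congr rfl fun m _ => ?_
  rw [Finset.mul_sum]

/-- Lemma 2.2. The recursion can always be continued: given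
`z = a·x + b·y` and `a₀ = 1, a₁, …, a_(k-1)` with
`Σ_(j≤i) C(n-j, i-j) aⱼ z^(i-j) xʲ ∈ yⁱS` for `i = 1, …, k-1`, there exists `aₖ` making
the `k`-th such sum lie in `yᵏS`. -/
theorem recursion_step_exists {S : Type*} [CommRing S] [IsDomain S] [Algebra ℚ S]
    (x y z a b : S) (hz : z = a * x + b * y)
    (n k : ℕ) (hn : 0 < n) (hk : k ≤ n)
    (c : ℕ → S) (hc0 : c 0 = 1)
    (hcond : ∀ i, 1 ≤ i → i ≤ k - 1 →
      (∑ j ∈ Finset.range (i + 1),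
        (Nat.choose (n - j) (i - j) : S) * c j * z ^ (i - j) * x ^ j) ∈
        Ideal.span {y ^ i}) :
    ∃ ck : S,
      (∑ j ∈ Finset.range (k + 1),
        (Nat.choose (n - j) (k - j) : S) * Function.update c k ck j * z ^ (k - j) * x ^ j) ∈
        Ideal.span {y ^ k} := by
  set w := a * x with hw
  set v := b * y with hv
  have hzwv : z = w + v := hz
  -- Step 1: S'(i) ∈ (y^i) for all i ≤ k-1, by strong induction.
  have main : ∀ i, i ≤ k - 1 →
      y ^ i ∣ ∑ j ∈ Finset.range (i+1),
        (Nat.choose (n-j) (i-j) : S) * c j * w^(i-j) * x^j := by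
    intro i
    induction i using Nat.strong_induction_on with
    | _ i ih =>
      intro hik
      have hin : i ≤ n := by omega
      have hkey := key_identity x w v n c i hin
      rw [← hzwv] at hkey
      have h0 : (∑ j ∈ Finset.range (i+1),
          (Nat.choose (n-j) (i-j) : S) * c j * w^(i-j) * x^j)
          = (∑ j ∈ Finset.range (i+1),
              (Nat.choose (n-j) (i-j) : S) * c j * z^(i-j) * x^j)
            - ∑ m ∈ Finset.range i, (Nat.choose (n-i+(m+1)) (m+1) : S) * v^(m+1) *
                ∑ j ∈ Finset.range (i-(m+1)+1),
                  (Nat.choose (n-j) (i-(m+1)-j) : S) * c j * w^(i-(m+1)-j) * x^j := by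
        have hsplit := Finset.sum_range_succ' (fun m =>
          (Nat.choose (n-i+m) m : S) * v^m *
            ∑ j ∈ Finset.range (i-m+1),
              (Nat.choose (n-j) (i-m-j) : S) * c j * w^(i-m-j) * x^j) i
        rw [hkey, hsplit]
        simp only [Nat.choose_zero_right, Nat.cast_one, pow_zero, one_mul, Nat.sub_zero,
          Nat.add_zero]
        ring
      rw [h0]
      apply dvd_sub
      · rcases Nat.eq_zero_or_pos i with hi0 | hi0
        · subst hi0; simp
        · have h := hcond i hi0 hik
          rwa [Ideal.mem_span_singleton] at h
      · apply Finset.dvd_sum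
        intro m hm
        rw [Finset.mem_range] at hm
        obtain ⟨t, ht⟩ := ih (i - (m+1)) (by omega) (by omega)
        rw [ht]
        calc y ^ i = y ^ (m+1) * y ^ (i - (m+1)) := by rw [← pow_add]; congr 1; omega
          _ ∣ (Nat.choose (n-i+(m+1)) (m+1) : S) * v^(m+1) * (y^(i-(m+1)) * t) := by
              rw [hv, mul_pow]
              exact ⟨(Nat.choose (n-i+(m+1)) (m+1) : S) * b^(m+1) * t, by ring⟩
  -- Step 2: choose ck so that S'(k) with updated c vanishes.
  refine ⟨-(∑ j ∈ Finset.range k, (Nat.choose (n-j) (k-j) : S) * c j * a^(k-j)), ?_⟩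
  set ck := -(∑ j ∈ Finset.range k, (Nat.choose (n-j) (k-j) : S) * c j * a^(k-j)) with hck
  set c' := Function.update c k ck with hc'
  have hc'lt : ∀ j, j < k → c' j = c j := fun j hj =>
    Function.update_of_ne (by omega) _ _
  have hc'k : c' k = ck := Function.update_self _ _ _
  have hS'k : (∑ j ∈ Finset.range (k+1),
      (Nat.choose (n-j) (k-j) : S) * c' j * w^(k-j) * x^j) = 0 := by
    rw [Finset.sum_range_succ]
    have e1 : ∀ j ∈ Finset.range k,
        (Nat.choose (n-j) (k-j) : S) * c' j * w^(k-j) * x^j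
          = ((Nat.choose (n-j) (k-j) : S) * c j * a^(k-j)) * x^k := by
      intro j hj
      rw [Finset.mem_range] at hj
      rw [hc'lt j hj, hw, mul_pow]
      have hx : x^(k-j) * x^j = x^k := by rw [← pow_add]; congr 1; omega
      calc (Nat.choose (n-j) (k-j) : S) * c j * (a^(k-j) * x^(k-j)) * x^j
          = (Nat.choose (n-j) (k-j) : S) * c j * a^(k-j) * (x^(k-j) * x^j) := by ring
        _ = ((Nat.choose (n-j) (k-j) : S) * c j * a^(k-j)) * x^k := by rw [hx]
    rw [Finset.sum_congr rfl e1, ← Finset.sum_mul]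
    simp only [Nat.sub_self, Nat.choose_zero_right, Nat.cast_one, pow_zero, one_mul,
      Nat.choose_self, hc'k, hck]
    ring
  have hkey := key_identity x w v n c' k hk
  rw [← hzwv] at hkey
  rw [Ideal.mem_span_singleton, hkey]
  apply Finset.dvd_sum
  intro m hm
  rw [Finset.mem_range] at hm
  rcases Nat.eq_zero_or_pos m with hm0 | hm0
  · subst hm0
    simp only [Nat.sub_zero, Nat.add_zero, Nat.choose_zero_right, Nat.cast_one, pow_zero,
      one_mul]
    rw [hS'k]
    exact dvd_zero _
  · have einner : (∑ j ∈ Finset.range (k-m+1),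
        (Nat.choose (n-j) (k-m-j) : S) * c' j * w^(k-m-j) * x^j)
        = ∑ j ∈ Finset.range (k-m+1),
            (Nat.choose (n-j) (k-m-j) : S) * c j * w^(k-m-j) * x^j := by
      refine Finset.sum_congr rfl fun j hj => ?_
      rw [Finset.mem_range] at hj
      rw [hc'lt j (by omega)]
    rw [einner]
    obtain ⟨t, ht⟩ := main (k - m) (by omega)
    rw [ht]
    calc y ^ k = y ^ m * y ^ (k - m) := by rw [← pow_add]; congr 1; omega
      _ ∣ (Nat.choose (n-k+m) m : S) * v^m * (y^(k-m) * t) := by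
          rw [hv, mul_pow]
          exact ⟨(Nat.choose (n-k+m) m : S) * b^m * t, by ring⟩
end

section
/- Let R be an integrally closed commutative Noetherian integral domain, semilocal of mixed characteristic with prime integer p in its Jacobson radical, all of whose maximal ideals have the same height. Let p, x, y be parameters in R, assume x and y each kill H_1(p^m, x^m, y^m; R) for every positive integer m, and let (z_i)_{i≥1} be a sequence of elements of R with p^N·z_i ∈ (x^i, y^i)R for every positive integer i. Then there exists a positive integer n such that for all i > n, z_i ∈ (x^i, y^i, (xy)^{i−1}z_1, (xy)^{i−2}z_2, …, (xy)^{i−n}z_n)R. -/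
/-- The height of an ideal: the infimum of the heights of primes containing it. -/
noncomputable def idealHeight {R : Type*} [CommRing R] (I : Ideal R) : ℕ∞ :=
  ⨅ (P : PrimeSpectrum R) (_ : I ≤ P.asIdeal), Order.height P

/-- The Koszul syzygies `x j • e i - x i • e j` among `x : Fin n → R`. -/
def koszulSyzygies {R : Type*} [CommRing R] {n : ℕ} (x : Fin n → R) : Set (Fin n → R) :=
  {v | ∃ i j : Fin n, i < j ∧
    v = x j • (Pi.single i 1 : Fin n → R) - x i • (Pi.single j 1 : Fin n → R)}

/-- `c` kills the first Koszul homology `H₁(x₁,…,xₙ; R)`: `c` times any syzygy of the `x i`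
is an `R`-combination of the Koszul syzygies. -/
def killsH1 {R : Type*} [CommRing R] {n : ℕ} (c : R) (x : Fin n → R) : Prop :=
  ∀ a : Fin n → R, (∑ i, a i * x i) = 0 → (c • a) ∈ Submodule.span R (koszulSyzygies x)

/-- `x₁,…,xₙ` are parameters: any `k` distinct elements among them generate an ideal
of height `k`. -/
def isParameters {R : Type*} [CommRing R] {n : ℕ} (x : Fin n → R) : Prop :=
  ∀ s : Finset (Fin n), idealHeight (Ideal.span (x '' (s : Set (Fin n)))) = (s.card : ℕ∞)

/-- `R⁺`: the integral closure of `R` in an algebraic closure of its fraction field. -/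
noncomputable abbrev Rplus (R : Type*) [CommRing R] [IsDomain R] :=
  integralClosure R (AlgebraicClosure (FractionRing R))

section Auxiliary

lemma killsH1_mul_mem {R : Type*} [CommRing R] {c P X Y z : R} (h : killsH1 c ![P, X, Y])
    (hz : P * z ∈ Ideal.span {X, Y}) : c * z ∈ Ideal.span {X, Y} := by
  obtain ⟨A, B, hAB⟩ := Ideal.mem_span_pair.mp hz
  have hsyz : (∑ i, (![z, -A, -B]) i * (![P, X, Y]) i) = 0 := by
    simp [Fin.sum_univ_three]
    linear_combination -hAB
  have hmem := h ![z, -A, -B] hsyz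
  let ev0 : (Fin 3 → R) →ₗ[R] R := LinearMap.proj 0
  have hle : Submodule.span R (koszulSyzygies ![P, X, Y]) ≤
      Submodule.comap ev0 (Ideal.span {X, Y}) := by
    rw [Submodule.span_le]
    rintro v ⟨i, j, hij, rfl⟩
    simp only [SetLike.mem_coe, Submodule.mem_comap, ev0, LinearMap.proj_apply, Pi.sub_apply,
      Pi.smul_apply, smul_eq_mul]
    fin_cases i <;> fin_cases j <;> simp_all [Pi.single_apply] <;>
      exact Ideal.subset_span (by simp)
  have h2 := hle hmem
  simp only [Submodule.mem_comap, ev0, LinearMap.proj_apply, Pi.smul_apply, smul_eq_mul,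
    Matrix.cons_val_zero] at h2
  exact h2

lemma idealHeight_bot {R : Type*} [CommRing R] [IsDomain R] :
    idealHeight (⊥ : Ideal R) = 0 := by
  refine le_antisymm ?_ (zero_le)
  have h1 : idealHeight (⊥ : Ideal R) ≤ Order.height (⊥ : PrimeSpectrum R) := by
    refine iInf_le_of_le ⊥ (iInf_le_of_le bot_le le_rfl)
  simpa using h1.trans_eq (Order.height_bot _)

lemma ne_zero_of_idealHeight_one {R : Type*} [CommRing R] [IsDomain R] {a : R}
    (h : idealHeight (Ideal.span {a}) = 1) : a ≠ 0 := by
  intro ha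
  rw [ha, Ideal.span_singleton_eq_bot.mpr rfl, idealHeight_bot] at h
  exact zero_ne_one h

lemma exists_prime_chain_of_height_two {R : Type*} [CommRing R] {x y : R}
    (h : idealHeight (Ideal.span {x, y}) = 2)
    (J : Ideal R) (hJ : J.IsPrime) (hxJ : x ∈ J) (hyJ : y ∈ J) :
    ∃ P1 : Ideal R, P1.IsPrime ∧ P1 < J ∧ P1 ≠ ⊥ := by
  set P : PrimeSpectrum R := ⟨J, hJ⟩ with hP
  have hle : Ideal.span {x, y} ≤ J := by
    rw [Ideal.span_le]
    rintro v (rfl | rfl)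
    exacts [hxJ, by simp_all]
  have h2 : (2 : ℕ∞) ≤ Order.height P := by
    rw [← h]
    exact iInf_le_of_le P (iInf_le_of_le hle le_rfl)
  obtain ⟨p, hlast, hlen⟩ := Order.exists_series_of_le_height P (n := 2) h2
  have h01 : p ⟨0, by omega⟩ < p ⟨1, by omega⟩ := p.strictMono (by simp [Fin.lt_def])
  have h12 : p ⟨1, by omega⟩ < p ⟨p.length, by omega⟩ := p.strictMono (by simp [Fin.lt_def]; omega)
  have hlast' : p ⟨p.length, by omega⟩ = P := hlast
  refine ⟨(p ⟨1, by omega⟩).asIdeal, (p ⟨1, by omega⟩).isPrime, ?_, ?_⟩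
  · have := hlast' ▸ h12
    exact this
  · intro hbot
    have : (p ⟨0, by omega⟩).asIdeal < (⊥ : Ideal R) := hbot ▸ h01
    exact (not_lt_bot this)

theorem colon_x_y {R : Type*} [CommRing R] [IsDomain R] [IsNoetherianRing R] [IsIntegrallyClosed R]
    (x y : R) (hx0 : x ≠ 0)
    (hJ2 : ∀ J : Ideal R, J.IsPrime → x ∈ J → y ∈ J →
      ∃ P1 : Ideal R, P1.IsPrime ∧ P1 < J ∧ P1 ≠ ⊥)
    {t : R} (ht : y * t ∈ Ideal.span {x}) : t ∈ Ideal.span {x} := by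
  classical
  by_contra htx
  set S : Set (Ideal R) :=
    {I | ∃ s : R, s ∉ Ideal.span {x} ∧ y * s ∈ Ideal.span {x} ∧
      I = (Ideal.span {x}).colon (Ideal.span {s})} with hS
  obtain ⟨J, hJS, hmax⟩ :=
    (set_has_maximal_iff_noetherian.mpr inferInstance) S ⟨_, t, htx, ht, rfl⟩
  obtain ⟨s, hs, hys, rfl⟩ := hJS
  set J := (Ideal.span {x}).colon (Ideal.span {s}) with hJdef
  have hmemJ : ∀ r : R, r ∈ J ↔ r * s ∈ Ideal.span {x} := fun r => Ideal.mem_colon_span_singleton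
  have hs0 : s ≠ 0 := fun h => hs (h ▸ (Ideal.span {x}).zero_mem)
  have hJprime : J.IsPrime := by
    constructor
    · intro h
      exact hs (by simpa [one_mul] using (hmemJ 1).mp (h ▸ Submodule.mem_top))
    · intro a b hab
      by_cases hb : b ∈ J
      · exact Or.inr hb
      · left
        have hbs : b * s ∉ Ideal.span {x} := fun h => hb ((hmemJ b).mpr h)
        have hybs : y * (b * s) ∈ Ideal.span {x} := by
          rw [show y * (b * s) = b * (y * s) by ring]
          exact Ideal.mul_mem_left _ b hys
        have hJ'S : (Ideal.span {x}).colon (Ideal.span {b * s}) ∈ S := ⟨b * s, hbs, hybs, rfl⟩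
        have hle : J ≤ (Ideal.span {x}).colon (Ideal.span {b * s}) := by
          intro r hr
          rw [Ideal.mem_colon_span_singleton, show r * (b * s) = b * (r * s) by ring]
          exact Ideal.mul_mem_left _ b ((hmemJ r).mp hr)
        have heq : J = (Ideal.span {x}).colon (Ideal.span {b * s}) :=
          eq_of_le_of_not_lt hle (hmax _ hJ'S)
        rw [hmemJ]
        have : a ∈ (Ideal.span {x}).colon (Ideal.span {b * s}) := by
          rw [Ideal.mem_colon_span_singleton, show a * (b * s) = a * b * s by ring]
          exact (hmemJ (a * b)).mp hab
        rw [← heq] at this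
        exact (hmemJ a).mp this
  have hxJ : x ∈ J := (hmemJ x).mpr (Ideal.mul_mem_right s _ (Ideal.mem_span_singleton_self x))
  have hyJ : y ∈ J := (hmemJ y).mpr hys
  obtain ⟨P1, hP1p, hP1lt, hP1ne⟩ := hJ2 J hJprime hxJ hyJ
  set ρ : R → R := fun j => if h : ∃ r, j * s = x * r then h.choose else 0 with hρdef
  have hρ : ∀ j ∈ J, j * s = x * ρ j := by
    intro j hj
    obtain ⟨r, hr⟩ := Ideal.mem_span_singleton'.mp ((hmemJ j).mp hj)
    have hex : ∃ r, j * s = x * r := ⟨r, by linear_combination -hr⟩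
    simp only [hρdef, dif_pos hex]
    exact hex.choose_spec
  by_cases hcase : ∀ j ∈ J, ρ j ∈ J
  · -- s/x would be integral over R, hence in R; contradiction
    set K := FractionRing R
    set f := algebraMap R K with hf
    have finj : Function.Injective f := IsFractionRing.injective R K
    have hfx : f x ≠ 0 := fun h => hx0 (finj (by rw [h, map_zero]))
    set u : K := f s * (f x)⁻¹ with hu
    set NN : Submodule R K := Submodule.map (Algebra.linearMap R K) (J : Submodule R R) with hNN
    have hNbot : NN ≠ ⊥ := by
      rw [Submodule.ne_bot_iff]
      exact ⟨f x, ⟨x, hxJ, rfl⟩, hfx⟩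
    have hNfg : NN.FG := (IsNoetherian.noetherian (J : Submodule R R)).map _
    have hint : IsIntegral R u := by
      apply isIntegral_of_smul_mem_submodule NN hNbot hNfg u
      rintro _ ⟨j, hj, rfl⟩
      refine ⟨ρ j, hcase j hj, ?_⟩
      have hmul : f (ρ j) * f x = f s * f j := by
        rw [← map_mul, ← map_mul]
        exact congrArg f (by linear_combination -(hρ j hj))
      show f (ρ j) = u • (Algebra.linearMap R K j)
      simp only [Algebra.linearMap_apply, smul_eq_mul, hu]
      linear_combination (f x)⁻¹ * hmul - f (ρ j) * mul_inv_cancel₀ hfx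
    obtain ⟨r, hr⟩ := IsIntegrallyClosed.isIntegral_iff.mp hint
    apply hs
    rw [Ideal.mem_span_singleton']
    refine ⟨r, finj ?_⟩
    rw [map_mul, hr, hu]
    linear_combination (f s) * mul_inv_cancel₀ hfx
  · -- a prime P1 strictly below J would have to be zero
    push_neg at hcase
    obtain ⟨w, hwJ, hrw⟩ := hcase
    set r := ρ w with hrdef
    have hws : w * s = x * r := hρ w hwJ
    have key : ∀ j ∈ J, j * r = w * ρ j := by
      intro j hj
      have h1 := hρ j hj
      have : x * (j * r) = x * (w * ρ j) := by linear_combination w * h1 - j * hws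
      exact mul_left_cancel₀ hx0 this
    have hwP1 : w ∉ P1 := by
      intro hw
      apply absurd (le_of_lt hP1lt) (fun hle => ?_)
      have hJP1 : J ≤ P1 := by
        intro j hj
        have : j * r ∈ P1 := by
          rw [key j hj]; exact Ideal.mul_mem_right _ _ hw
        rcases hP1p.mem_or_mem this with h | h
        · exact h
        · exact absurd (hle h) hrw
      exact (lt_irrefl _ (lt_of_lt_of_le hP1lt hJP1))
    obtain ⟨q, hqP1, hq0⟩ := Submodule.ne_bot_iff _ |>.mp hP1ne
    set c : ℕ → R := fun n => ρ^[n] q with hcdef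
    have hcinv : ∀ n, c n ∈ P1 ∧ q * r ^ n = w ^ n * c n := by
      intro n
      induction n with
      | zero => exact ⟨hqP1, by simp [hcdef]⟩
      | succ n ih =>
        have hcJ : c n ∈ J := le_of_lt hP1lt ih.1
        have hsucc : c (n + 1) = ρ (c n) := by
          simp only [hcdef, Function.iterate_succ_apply']
        have hkey := key (c n) hcJ
        constructor
        · have : w * ρ (c n) ∈ P1 := by
            rw [← hkey]; exact Ideal.mul_mem_right _ _ ih.1
          rcases hP1p.mem_or_mem this with h | h
          · exact absurd h hwP1
          · rwa [hsucc]
        · rw [hsucc]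
          linear_combination r * ih.2 + w ^ n * hkey
    have hmono : Monotone (fun n => Ideal.span (c '' Set.Iic n)) := by
      intro a b hab
      exact Ideal.span_mono (Set.image_mono (Set.Iic_subset_Iic.mpr hab))
    obtain ⟨n, hn⟩ := (monotone_stabilizes_iff_noetherian.mpr inferInstance)
      ⟨fun n => Ideal.span (c '' Set.Iic n), hmono⟩
    have hc1 : c (n + 1) ∈ Ideal.span (c '' Set.Iic n) := by
      have hmem1 : c (n + 1) ∈ Ideal.span (c '' Set.Iic (n + 1)) :=
        Ideal.subset_span ⟨n + 1, Set.mem_Iic.mpr le_rfl, rfl⟩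
      have hEq : Ideal.span (c '' Set.Iic n) = Ideal.span (c '' Set.Iic (n + 1)) :=
        hn (n + 1) (Nat.le_succ n)
      rwa [hEq]
    have claim : ∀ v ∈ Ideal.span (c '' Set.Iic n), ∃ d, w ^ (n + 1) * v = q * (w * d) := by
      intro v hv
      induction hv using Submodule.span_induction with
      | mem v hv =>
        obtain ⟨k, hk, rfl⟩ := hv
        have hkn : k ≤ n := Set.mem_Iic.mp hk
        refine ⟨w ^ (n - k) * r ^ k, ?_⟩
        have he := (hcinv k).2
        calc w ^ (n + 1) * c k = w ^ (n - k + 1) * (w ^ k * c k) := by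
              rw [← mul_assoc, ← pow_add]; congr 2; omega
          _ = w ^ (n - k + 1) * (q * r ^ k) := by rw [he]
          _ = q * (w * (w ^ (n - k) * r ^ k)) := by ring
      | zero => exact ⟨0, by ring⟩
      | add v₁ v₂ _ _ ih1 ih2 =>
        obtain ⟨d1, hd1⟩ := ih1; obtain ⟨d2, hd2⟩ := ih2
        exact ⟨d1 + d2, by rw [mul_add, hd1, hd2]; ring⟩
      | smul a v₁ _ ih =>
        obtain ⟨d, hd⟩ := ih
        exact ⟨a * d, by rw [smul_eq_mul, show w^(n+1)*(a*v₁) = a*(w^(n+1)*v₁) by ring, hd]; ring⟩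
    obtain ⟨d, hd⟩ := claim _ hc1
    have hq : q * (r ^ (n + 1) - w * d) = 0 := by
      have := (hcinv (n + 1)).2
      linear_combination this + hd
    have hrn : r ^ (n + 1) = w * d := by
      rcases mul_eq_zero.mp hq with h | h
      · exact absurd h hq0
      · exact sub_eq_zero.mp h
    have : r ∈ J := hJprime.mem_of_pow_mem (n + 1) (by rw [hrn]; exact Ideal.mul_mem_right _ _ hwJ)
    exact hrw this

lemma colon_pow_y {R : Type*} [CommRing R] [IsDomain R] {x y : R} (hx0 : x ≠ 0)
    (hC : ∀ t, y * t ∈ Ideal.span {x} → t ∈ Ideal.span {x}) :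
    ∀ a b t, y ^ b * t ∈ Ideal.span {x ^ a} → t ∈ Ideal.span {x ^ a} := by
  have hone : ∀ a t, y * t ∈ Ideal.span {x ^ a} → t ∈ Ideal.span {x ^ a} := by
    intro a
    induction a with
    | zero => intro t _; exact Ideal.mem_span_singleton'.mpr ⟨t, by ring⟩
    | succ a ih =>
      intro t hyt
      obtain ⟨c, hc⟩ := Ideal.mem_span_singleton'.mp hyt
      have h1 : y * t ∈ Ideal.span {x} := Ideal.mem_span_singleton'.mpr
        ⟨c * x ^ a, by rw [← hc]; ring⟩
      obtain ⟨t1, ht1⟩ := Ideal.mem_span_singleton'.mp (hC t h1)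
      have h2 : y * t1 = c * x ^ a := by
        apply mul_right_cancel₀ hx0
        rw [mul_assoc, ht1, ← hc]
        ring
      obtain ⟨t2, ht2⟩ := Ideal.mem_span_singleton'.mp
        (ih t1 (Ideal.mem_span_singleton'.mpr ⟨c, h2.symm⟩))
      exact Ideal.mem_span_singleton'.mpr ⟨t2, by rw [← ht1, ← ht2]; ring⟩
  intro a b
  induction b with
  | zero => intro t ht; simpa using ht
  | succ b ih =>
    intro t ht
    refine ih t (hone a _ ?_)
    rw [show y * (y ^ b * t) = y ^ (b + 1) * t by ring]
    exact ht

lemma rep_modulo {R : Type*} [CommRing R] [IsDomain R] {x y : R} (hx0 : x ≠ 0)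
    (hC : ∀ t, y * t ∈ Ideal.span {x} → t ∈ Ideal.span {x})
    {i : ℕ} (hi : 0 < i) {u : R}
    (h1 : x * u ∈ Ideal.span {x ^ i, y ^ i}) (h2 : y * u ∈ Ideal.span {x ^ i, y ^ i}) :
    ∃ w, u - w * (x * y) ^ (i - 1) ∈ Ideal.span {x ^ i, y ^ i} := by
  obtain ⟨j, rfl⟩ : ∃ j, i = j + 1 := ⟨i - 1, by omega⟩
  simp only [Nat.add_sub_cancel]
  obtain ⟨α, β, hαβ⟩ := Ideal.mem_span_pair.mp h1
  obtain ⟨α', β', hαβ'⟩ := Ideal.mem_span_pair.mp h2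
  have hβx : y ^ (j + 1) * β ∈ Ideal.span {x ^ 1} := by
    rw [pow_one, Ideal.mem_span_singleton']
    exact ⟨u - α * x ^ j, by linear_combination -hαβ⟩
  obtain ⟨β₀, hβ₀⟩ := Ideal.mem_span_singleton'.mp
    (colon_pow_y hx0 hC 1 (j + 1) β (by simpa using hβx))
  rw [pow_one] at hβ₀
  have hu : u = α * x ^ j + β₀ * y ^ (j + 1) := by
    apply mul_left_cancel₀ hx0
    linear_combination -hαβ - y ^ (j+1) * hβ₀
  have heq : (α * y - α' * x) * x ^ j = y ^ (j + 1) * (β' - β₀ * y) := by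
    linear_combination -hαβ' - y * hu
  have hβ' : y ^ (j + 1) * (β' - β₀ * y) ∈ Ideal.span {x ^ j} :=
    Ideal.mem_span_singleton'.mpr ⟨α * y - α' * x, heq⟩
  obtain ⟨c₀, hc₀⟩ := Ideal.mem_span_singleton'.mp (colon_pow_y hx0 hC j (j + 1) _ hβ')
  have hcancel : (α * y - α' * x) * x ^ j = (c₀ * y ^ (j + 1)) * x ^ j := by
    rw [heq]
    linear_combination -(y ^ (j + 1) * hc₀)
  have hcancel' : α * y - α' * x = c₀ * y ^ (j + 1) :=
    mul_right_cancel₀ (pow_ne_zero j hx0) hcancel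
  obtain ⟨d, hd⟩ := Ideal.mem_span_singleton'.mp
    (hC (α - c₀ * y ^ j) (Ideal.mem_span_singleton'.mpr ⟨α', by linear_combination -hcancel'⟩))
  refine ⟨c₀, Ideal.mem_span_pair.mpr ⟨d, β₀, ?_⟩⟩
  linear_combination x ^ j * hd - hu

end Auxiliary

/-- Lemma 2.4. If `p^N·zᵢ ∈ (xⁱ,yⁱ)R` for all `i ≥ 1`, then there is `n`
such that for all `i > n`, `zᵢ ∈ (xⁱ, yⁱ, (xy)^(i-1)z₁, …, (xy)^(i-n)z_n)R`. -/
theorem eventually_in_earlier_ideal {R : Type*} [CommRing R] [IsDomain R]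
    [IsNoetherianRing R] [IsIntegrallyClosed R]
    (p : ℕ) (hp : p.Prime) (hpJ : (p : R) ∈ Ideal.jacobson (⊥ : Ideal R)) (hp0 : (p : R) ≠ 0)
    (hsemi : {I : Ideal R | I.IsMaximal}.Finite)
    (hht : ∀ m m' : Ideal R, m.IsMaximal → m'.IsMaximal → idealHeight m = idealHeight m')
    (x y : R) (hpar : isParameters ![(p : R), x, y])
    (hkill : ∀ m : ℕ, 0 < m →
      killsH1 x ![(p : R) ^ m, x ^ m, y ^ m] ∧ killsH1 y ![(p : R) ^ m, x ^ m, y ^ m])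
    (N : ℕ) (z : ℕ → R)
    (hz : ∀ i : ℕ, 0 < i → (p : R) ^ N * z i ∈ Ideal.span {x ^ i, y ^ i}) :
    ∃ n : ℕ, 0 < n ∧ ∀ i : ℕ, n < i →
      z i ∈ Ideal.span ({x ^ i, y ^ i} ∪
        (fun m : ℕ => (x * y) ^ (i - m) * z m) '' Set.Icc 1 n) := by
  
  classical
  -- heights of (x) and (x,y) from the parameters hypothesis
  have hx1 : idealHeight (Ideal.span {x}) = 1 := by
    have h := hpar {1}
    simpa using h
  have hy1 : idealHeight (Ideal.span {y}) = 1 := by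
    have h := hpar {2}
    simpa using h
  have hxy2 : idealHeight (Ideal.span {x, y}) = 2 := by
    have h := hpar {1, 2}
    simpa [Set.image_insert_eq] using h
  have hx0 : x ≠ 0 := ne_zero_of_idealHeight_one hx1
  have hy0 : y ≠ 0 := ne_zero_of_idealHeight_one hy1
  have hC : ∀ t, y * t ∈ Ideal.span {x} → t ∈ Ideal.span {x} :=
    fun t ht => colon_x_y x y hx0 (exists_prime_chain_of_height_two hxy2) ht
  -- representation of each z i for i ≥ N + 1
  have hrep : ∀ i, N + 1 ≤ i →
      ∃ w, z i - w * (x * y) ^ (i - 1) ∈ Ideal.span {x ^ i, y ^ i} := by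
    intro i hi
    have hi1 : 0 < i := by omega
    have hpz : (p : R) ^ i * z i ∈ Ideal.span {x ^ i, y ^ i} := by
      have := hz i hi1
      have hmul := Ideal.mul_mem_left _ ((p : R) ^ (i - N)) this
      rwa [← mul_assoc, ← pow_add, Nat.sub_add_cancel (by omega : N ≤ i)] at hmul
    have hxz : x * z i ∈ Ideal.span {x ^ i, y ^ i} :=
      killsH1_mul_mem (hkill i hi1).1 hpz
    have hyz : y * z i ∈ Ideal.span {x ^ i, y ^ i} :=
      killsH1_mul_mem (hkill i hi1).2 hpz
    exact rep_modulo hx0 hC hi1 hxz hyz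
  set W : ℕ → R := fun i =>
    if h : ∃ w, z i - w * (x * y) ^ (i - 1) ∈ Ideal.span {x ^ i, y ^ i} then h.choose else 0
    with hWdef
  have hW : ∀ i, N + 1 ≤ i → z i - W i * (x * y) ^ (i - 1) ∈ Ideal.span {x ^ i, y ^ i} := by
    intro i hi
    have hex := hrep i hi
    simp only [hWdef, dif_pos hex]
    exact hex.choose_spec
  -- stabilize the chain of ideals (x, y, W (N+1), ..., W (N+1+k))
  have hmono : Monotone (fun k => Ideal.span ({x, y} ∪ W '' Set.Icc (N + 1) (N + 1 + k))) := by
    intro a b hab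
    refine Ideal.span_mono (Set.union_subset_union_right _ (Set.image_mono ?_))
    exact Set.Icc_subset_Icc le_rfl (by omega)
  obtain ⟨k, hk⟩ := (monotone_stabilizes_iff_noetherian.mpr inferInstance)
    ⟨fun k => Ideal.span ({x, y} ∪ W '' Set.Icc (N + 1) (N + 1 + k)), hmono⟩
  refine ⟨N + 1 + k, by omega, ?_⟩
  intro i hi
  set n := N + 1 + k with hn
  set G := Ideal.span ({x ^ i, y ^ i} ∪
    (fun m : ℕ => (x * y) ^ (i - m) * z m) '' Set.Icc 1 n) with hG
  have hGx : x ^ i ∈ G := Ideal.subset_span (Or.inl (Set.mem_insert _ _))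
  have hGy : y ^ i ∈ G := Ideal.subset_span (Or.inl (by simp))
  have hsub : Ideal.span {x ^ i, y ^ i} ≤ G := by
    rw [Ideal.span_le]
    rintro v (rfl | rfl)
    exacts [hGx, by simp_all [hGy]]
  have hiN : N + 1 ≤ i := by omega
  -- W i lies in the stabilized ideal
  have hWi : W i ∈ Ideal.span ({x, y} ∪ W '' Set.Icc (N + 1) n) := by
    have h1 : W i ∈ Ideal.span ({x, y} ∪ W '' Set.Icc (N + 1) (N + 1 + (i - (N + 1)))) := by
      apply Ideal.subset_span
      exact Or.inr ⟨i, Set.mem_Icc.mpr ⟨hiN, by omega⟩, rfl⟩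
    have hEq : Ideal.span ({x, y} ∪ W '' Set.Icc (N + 1) (N + 1 + k)) =
        Ideal.span ({x, y} ∪ W '' Set.Icc (N + 1) (N + 1 + (i - (N + 1)))) :=
      hk (i - (N + 1)) (by omega)
    show W i ∈ Ideal.span ({x, y} ∪ W '' Set.Icc (N + 1) (N + 1 + k))
    rw [hEq]
    exact h1
  -- multiplying the stabilized ideal by (xy)^(i-1) lands in G
  have claim : ∀ v ∈ Ideal.span ({x, y} ∪ W '' Set.Icc (N + 1) n),
      v * (x * y) ^ (i - 1) ∈ G := by
    intro v hv
    induction hv using Submodule.span_induction with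
    | mem v hv =>
      rcases hv with (hvx | hvy) | ⟨m, hm, hvW⟩
      · -- v = x
        rw [hvx]
        have hxx : x ^ (i - 1) * x = x ^ i := by
          rw [← pow_succ]; congr 1; omega
        have hrw : x * (x * y) ^ (i - 1) = y ^ (i - 1) * (x ^ (i - 1) * x) := by
          rw [mul_pow]; ring
        rw [hrw, hxx]
        exact Ideal.mul_mem_left _ _ hGx
      · -- v = y
        rw [hvy]
        have hyy : y ^ (i - 1) * y = y ^ i := by
          rw [← pow_succ]; congr 1; omega
        have hrw : y * (x * y) ^ (i - 1) = x ^ (i - 1) * (y ^ (i - 1) * y) := by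
          rw [mul_pow]; ring
        rw [hrw, hyy]
        exact Ideal.mul_mem_left _ _ hGy
      · -- v = W m
        rw [← hvW]
        obtain ⟨hm1, hm2⟩ := Set.mem_Icc.mp hm
        have hmi : m ≤ i := by omega
        have hm1' : 1 ≤ m := by omega
        obtain ⟨a, b, hab⟩ := Ideal.mem_span_pair.mp (hW m hm1)
        -- hab : a * x^m + b * y^m = z m - W m * (x*y)^(m-1)
        have e1 : x ^ (i - m) * x ^ m = x ^ i := by rw [← pow_add]; congr 1; omega
        have e2 : y ^ (i - m) * y ^ m = y ^ i := by rw [← pow_add]; congr 1; omega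
        have e3 : (x * y) ^ (i - m) * (x * y) ^ (m - 1) = (x * y) ^ (i - 1) := by
          rw [← pow_add]; congr 1; omega
        have hkey : W m * (x * y) ^ (i - 1) =
            (x * y) ^ (i - m) * z m - (a * y ^ (i - m)) * x ^ i - (b * x ^ (i - m)) * y ^ i := by
          rw [← e1, ← e2, ← e3]
          linear_combination ((x * y) ^ (i - m)) * hab
        rw [hkey]
        have hz_mem : (x * y) ^ (i - m) * z m ∈ G :=
          Ideal.subset_span (Or.inr ⟨m, Set.mem_Icc.mpr ⟨hm1', hm2⟩, rfl⟩)
        exact Ideal.sub_mem _ (Ideal.sub_mem _ hz_mem (Ideal.mul_mem_left _ _ hGx))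
          (Ideal.mul_mem_left _ _ hGy)
    | zero => simpa using G.zero_mem
    | add v₁ v₂ _ _ ih1 ih2 => rw [add_mul]; exact G.add_mem ih1 ih2
    | smul a v₁ _ ih =>
      rw [smul_eq_mul, mul_assoc]
      exact Ideal.mul_mem_left _ _ ih
  have hfinal : z i = (z i - W i * (x * y) ^ (i - 1)) + W i * (x * y) ^ (i - 1) := by ring
  rw [hfinal]
  exact G.add_mem (hsub (hW i hiN)) (claim _ hWi)
end

section
/- Let p be a prime, let M > L be positive integers, let S be a commutative integral domain containing the rational numbers, and let x, y, z, a_1, …, a_k ∈ S with a_0 = 1 and k < p^L an integer, such that Σ_{j=0}^i C(p^L−j, i−j)·a_j·z^{i−j}·x^j ∈ y^i·S for all i ≤ k. For j > 0 set ã_j = (∏_{m=0}^{j−1} (p^M−m)/(p^L−m))·a_j. Then for each j > 0 there is a rational number q_j which is a unit in the localization ℤ_(p) (i.e., v_p(q_j) = 0) such that ã_j = p^{M−L}·q_j·a_j, and for all i ≤ k, Σ_{j=0}^i C(p^M−j, i−j)·ã_j·z^{i−j}·x^j = p^{M−L}·q_i·Σ_{j=0}^i C(p^L−j, i−j)·a_j·z^{i−j}·x^j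 ∈ y^i·S (where ã_0 = 1 in the left-hand sum). -/
private lemma choose_mul_factorial_eq_prod (N i j : ℕ) (hji : j ≤ i) (hiN : i ≤ N) :
    ((N - j).choose (i - j) : ℚ) * (Nat.factorial (i - j) : ℚ) =
      ∏ m ∈ Finset.Ico j i, ((N : ℚ) - m) := by
  have h1 : (N - j).descFactorial (i - j) = Nat.factorial (i - j) * (N - j).choose (i - j) :=
    Nat.descFactorial_eq_factorial_mul_choose _ _
  have h2 : ∏ m ∈ Finset.Ico j i, ((N : ℚ) - m) =
      ∏ m ∈ Finset.range (i - j), ((N : ℚ) - (j + m)) := by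
    rw [Finset.prod_Ico_eq_prod_range]
    exact Finset.prod_congr rfl fun m _ => by push_cast; ring
  have hcast : ((N - j).descFactorial (i - j) : ℚ) =
      ∏ m ∈ Finset.range (i - j), ((N : ℚ) - (j + m)) := by
    rw [Nat.descFactorial_eq_prod_range, Nat.cast_prod]
    refine Finset.prod_congr rfl fun m hm => ?_
    rw [Finset.mem_range] at hm
    have h3 : j + m ≤ N := by omega
    have h4 : N - j - m = N - (j + m) := by omega
    rw [h4, Nat.cast_sub h3]
    push_cast; ring
  rw [h2, ← hcast, h1]
  push_cast; ring

private lemma val_pow_sub (p : ℕ) (hp : p.Prime) (A m : ℕ) (hm : 0 < m) (hmA : m < p ^ A) :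
    padicValNat p (p ^ A - m) = padicValNat p m := by
  haveI : Fact p.Prime := ⟨hp⟩
  set t := padicValNat p m with ht
  have hdvd : p ^ t ∣ m := pow_padicValNat_dvd
  obtain ⟨c, hc⟩ := hdvd
  have hpc : ¬ p ∣ c := by
    intro hdc
    obtain ⟨d, hd⟩ := hdc
    have : p ^ (t + 1) ∣ m := ⟨d, by rw [hc, hd]; ring⟩
    exact pow_succ_padicValNat_not_dvd hm.ne' this
  have htA : t < A := by
    have h1 : p ^ t ≤ m := Nat.le_of_dvd hm ⟨c, hc⟩
    have := lt_of_le_of_lt h1 hmA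
    exact (Nat.pow_lt_pow_iff_right hp.one_lt).mp this
  have hcpos : 0 < c := by
    rcases Nat.eq_zero_or_pos c with h | h
    · simp [h] at hc; omega
    · exact h
  have hsplit : p ^ A = p ^ t * p ^ (A - t) := by
    rw [← pow_add]; congr 1; omega
  have hclt : c < p ^ (A - t) := by
    by_contra h
    push_neg at h
    have : p ^ t * p ^ (A - t) ≤ p ^ t * c := Nat.mul_le_mul_left _ h
    rw [← hsplit, ← hc] at this; omega
  have hkey : p ^ A - m = p ^ t * (p ^ (A - t) - c) := by
    rw [hsplit, hc, Nat.mul_sub]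
  rw [hkey]
  have hw : ¬ p ∣ (p ^ (A - t) - c) := by
    intro hdw
    have hdp : p ∣ p ^ (A - t) := dvd_pow_self p (by omega)
    have : p ∣ p ^ (A - t) - (p ^ (A - t) - c) := Nat.dvd_sub hdp hdw
    rw [Nat.sub_sub_self hclt.le] at this
    exact hpc this
  have hwpos : 0 < p ^ (A - t) - c := by omega
  rw [padicValNat.mul (pow_ne_zero t hp.pos.ne') hwpos.ne', padicValNat.prime_pow,
    padicValNat.eq_zero_of_not_dvd hw, add_zero]

private lemma padicValRat_prod (p : ℕ) [Fact p.Prime] (s : Finset ℕ) (g : ℕ → ℚ)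
    (h : ∀ m ∈ s, g m ≠ 0) :
    padicValRat p (∏ m ∈ s, g m) = ∑ m ∈ s, padicValRat p (g m) := by
  classical
  induction s using Finset.cons_induction with
  | empty => simp
  | cons a s ha ih =>
    rw [Finset.prod_cons, Finset.sum_cons,
      padicValRat.mul (h a (Finset.mem_cons_self a s))
        (Finset.prod_ne_zero_iff.mpr fun m hm => h m (Finset.mem_cons_of_mem hm)),
      ih fun m hm => h m (Finset.mem_cons_of_mem hm)]

private lemma key_identity_s11 (p L M : ℕ) (hp : 2 ≤ p) (hLM : L ≤ M) (i j : ℕ)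
    (hji : j ≤ i) (hi : i < p ^ L) :
    ((p ^ M - j).choose (i - j) : ℚ) *
        ∏ m ∈ Finset.range j, (((p : ℚ) ^ M - m) / ((p : ℚ) ^ L - m)) =
      ((p ^ L - j).choose (i - j) : ℚ) *
        ∏ m ∈ Finset.range i, (((p : ℚ) ^ M - m) / ((p : ℚ) ^ L - m)) := by
  have hLM' : p ^ L ≤ p ^ M := Nat.pow_le_pow_right (by omega) hLM
  have hneL : ∀ m : ℕ, m < p ^ L → ((p : ℚ) ^ L - m) ≠ 0 := by
    intro m hm
    have : (m : ℚ) < (p : ℚ) ^ L := by exact_mod_cast hm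
    exact sub_ne_zero.mpr (ne_of_gt this)
  have hneM : ∀ m : ℕ, m < p ^ L → ((p : ℚ) ^ M - m) ≠ 0 := by
    intro m hm
    have hm' : m < p ^ M := lt_of_lt_of_le hm hLM'
    have : (m : ℚ) < (p : ℚ) ^ M := by exact_mod_cast hm'
    exact sub_ne_zero.mpr (ne_of_gt this)
  have hM := choose_mul_factorial_eq_prod (p ^ M) i j hji (le_of_lt (lt_of_lt_of_le hi hLM'))
  have hL := choose_mul_factorial_eq_prod (p ^ L) i j hji hi.le
  push_cast at hM hL
  have hfact : (Nat.factorial (i - j) : ℚ) ≠ 0 := Nat.cast_ne_zero.mpr (Nat.factorial_ne_zero _)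
  have hPL : (∏ m ∈ Finset.Ico j i, ((p : ℚ) ^ L - m)) ≠ 0 :=
    Finset.prod_ne_zero_iff.mpr fun m hm => hneL m (by
      rw [Finset.mem_Ico] at hm; omega)
  have hcross : ((p ^ M - j).choose (i - j) : ℚ) * ∏ m ∈ Finset.Ico j i, ((p : ℚ) ^ L - m) =
      ((p ^ L - j).choose (i - j) : ℚ) * ∏ m ∈ Finset.Ico j i, ((p : ℚ) ^ M - m) := by
    have h1 : (((p ^ M - j).choose (i - j) : ℚ) * ∏ m ∈ Finset.Ico j i, ((p : ℚ) ^ L - m)) *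
        (Nat.factorial (i - j) : ℚ) =
        (((p ^ L - j).choose (i - j) : ℚ) * ∏ m ∈ Finset.Ico j i, ((p : ℚ) ^ M - m)) *
        (Nat.factorial (i - j) : ℚ) := by
      rw [mul_right_comm, hM, mul_right_comm, hL]; ring
    exact mul_right_cancel₀ hfact h1
  have hPLj : (∏ m ∈ Finset.range j, ((p : ℚ) ^ L - m)) ≠ 0 :=
    Finset.prod_ne_zero_iff.mpr fun m hm => hneL m (by rw [Finset.mem_range] at hm; omega)
  rw [← Finset.prod_range_mul_prod_Ico _ hji]
  simp only [Finset.prod_div_distrib]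
  field_simp
  linear_combination (∏ m ∈ Finset.range j, ((p : ℚ) ^ M - m)) * hcross

/-- Lemma 2.5. Rescaling the coefficients `aⱼ` by
`∏_(m<j) (p^M - m)/(p^L - m)` replaces each by `p^(M-L)` times a `ℤ_(p)`-unit multiple, and
transforms the sums `Σⱼ C(p^L-j, i-j) aⱼ z^(i-j) xʲ` into `p^(M-L)·qᵢ` times themselves,
keeping them in `yⁱS`. -/
theorem rescale_coefficients {S : Type*} [CommRing S] [IsDomain S] [Algebra ℚ S]
    (p : ℕ) (hp : p.Prime) (L M : ℕ) (hL : 0 < L) (hLM : L < M)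
    (x y z : S) (k : ℕ) (hk : k < p ^ L)
    (a : ℕ → S) (ha0 : a 0 = 1)
    (hcond : ∀ i ≤ k,
      (∑ j ∈ Finset.range (i + 1),
        (Nat.choose (p ^ L - j) (i - j) : S) * a j * z ^ (i - j) * x ^ j) ∈
        Ideal.span {y ^ i})
    (atil : ℕ → S) (hatil0 : atil 0 = 1)
    (hatil : ∀ j, 0 < j →
      atil j = (∏ m ∈ Finset.range j, (((p : ℚ) ^ M - m) / ((p : ℚ) ^ L - m))) • a j) :
    ∃ q : ℕ → ℚ,
      (∀ j, 0 < j → j ≤ k → q j ≠ 0 ∧ padicValRat p (q j) = 0 ∧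
        atil j = ((p : ℚ) ^ (M - L) * q j) • a j) ∧
      (∀ i ≤ k,
        (∑ j ∈ Finset.range (i + 1),
          (Nat.choose (p ^ M - j) (i - j) : S) * atil j * z ^ (i - j) * x ^ j) =
          ((p : ℚ) ^ (M - L) * q i) •
            (∑ j ∈ Finset.range (i + 1),
              (Nat.choose (p ^ L - j) (i - j) : S) * a j * z ^ (i - j) * x ^ j) ∧
        (∑ j ∈ Finset.range (i + 1),
          (Nat.choose (p ^ M - j) (i - j) : S) * atil j * z ^ (i - j) * x ^ j) ∈
          Ideal.span {y ^ i}) := by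
  haveI : Fact p.Prime := ⟨hp⟩
  have hp2 : 2 ≤ p := hp.two_le
  set f : ℕ → ℚ := fun m => ((p : ℚ) ^ M - m) / ((p : ℚ) ^ L - m) with hfdef
  have hLM' : p ^ L ≤ p ^ M := Nat.pow_le_pow_right (by omega) hLM.le
  have hpne : ((p : ℚ)) ≠ 0 := Nat.cast_ne_zero.mpr hp.pos.ne'
  have hpow_ne : ((p : ℚ)) ^ (M - L) ≠ 0 := pow_ne_zero _ hpne
  have hneL : ∀ m : ℕ, m < p ^ L → ((p : ℚ) ^ L - m) ≠ 0 := by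
    intro m hm
    have : (m : ℚ) < (p : ℚ) ^ L := by exact_mod_cast hm
    exact sub_ne_zero.mpr (ne_of_gt this)
  have hneM : ∀ m : ℕ, m < p ^ L → ((p : ℚ) ^ M - m) ≠ 0 := by
    intro m hm
    have hm' : m < p ^ M := lt_of_lt_of_le hm hLM'
    have : (m : ℚ) < (p : ℚ) ^ M := by exact_mod_cast hm'
    exact sub_ne_zero.mpr (ne_of_gt this)
  have hfne : ∀ m : ℕ, m < p ^ L → f m ≠ 0 := fun m hm => div_ne_zero (hneM m hm) (hneL m hm)
  have hQne : ∀ j, j ≤ k → (∏ m ∈ Finset.range j, f m) ≠ 0 := fun j hj =>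
    Finset.prod_ne_zero_iff.mpr fun m hm => hfne m (by rw [Finset.mem_range] at hm; omega)
  have hpq : ∀ j : ℕ,
      (p : ℚ) ^ (M - L) * (((p : ℚ) ^ (M - L))⁻¹ * ∏ m ∈ Finset.range j, f m) =
        ∏ m ∈ Finset.range j, f m := by
    intro j
    rw [← mul_assoc, mul_inv_cancel₀ hpow_ne, one_mul]
  have hA : ∀ j, atil j = (∏ m ∈ Finset.range j, f m) • a j := by
    intro j
    rcases Nat.eq_zero_or_pos j with h | h
    · subst h; simp [hatil0, ha0]
    · exact hatil j h
  refine ⟨fun j => ((p : ℚ) ^ (M - L))⁻¹ * ∏ m ∈ Finset.range j, f m, ?_, ?_⟩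
  · intro j hj0 hjk
    beta_reduce
    refine ⟨mul_ne_zero (inv_ne_zero hpow_ne) (hQne j hjk), ?_, ?_⟩
    · have hf0 : f 0 = (p : ℚ) ^ (M - L) := by
        simp only [hfdef, Nat.cast_zero, sub_zero]
        exact (pow_sub₀ _ hpne hLM.le).symm
      have hsplit : ∏ m ∈ Finset.range j, f m = f 0 * ∏ m ∈ Finset.Ico 1 j, f m := by
        rw [Finset.range_eq_Ico]
        exact Finset.prod_eq_prod_Ico_succ_bot hj0 f
      have hq_eq : ((p : ℚ) ^ (M - L))⁻¹ * ∏ m ∈ Finset.range j, f m =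
          ∏ m ∈ Finset.Ico 1 j, f m := by
        rw [hsplit, hf0, ← mul_assoc, inv_mul_cancel₀ hpow_ne, one_mul]
      rw [hq_eq, padicValRat_prod p _ _ (fun m hm => hfne m (by
        rw [Finset.mem_Ico] at hm; omega))]
      refine Finset.sum_eq_zero fun m hm => ?_
      rw [Finset.mem_Ico] at hm
      have hm0 : 0 < m := hm.1
      have hmL : m < p ^ L := by omega
      have hmM : m < p ^ M := lt_of_lt_of_le hmL hLM'
      have e1 : ((p : ℚ) ^ M - m) = ((p ^ M - m : ℕ) : ℚ) := by
        rw [Nat.cast_sub hmM.le]; push_cast; ring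
      have e2 : ((p : ℚ) ^ L - m) = ((p ^ L - m : ℕ) : ℚ) := by
        rw [Nat.cast_sub hmL.le]; push_cast; ring
      show padicValRat p (((p : ℚ) ^ M - m) / ((p : ℚ) ^ L - m)) = 0
      rw [padicValRat.div (hneM m hmL) (hneL m hmL), e1, e2, padicValRat.of_nat,
        padicValRat.of_nat, val_pow_sub p hp M m hm0 hmM, val_pow_sub p hp L m hm0 hmL,
        sub_self]
    · rw [hpq j]
      exact hatil j hj0
  · intro i hi
    beta_reduce
    have hsum : (∑ j ∈ Finset.range (i + 1),
        (Nat.choose (p ^ M - j) (i - j) : S) * atil j * z ^ (i - j) * x ^ j) =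
        ((p : ℚ) ^ (M - L) * (((p : ℚ) ^ (M - L))⁻¹ * ∏ m ∈ Finset.range i, f m)) •
          (∑ j ∈ Finset.range (i + 1),
            (Nat.choose (p ^ L - j) (i - j) : S) * a j * z ^ (i - j) * x ^ j) := by
      rw [hpq i, Finset.smul_sum]
      refine Finset.sum_congr rfl fun j hj => ?_
      rw [Finset.mem_range] at hj
      have hji : j ≤ i := by omega
      have hkey := key_identity_s11 p L M hp2 hLM.le i j hji (by omega)
      rw [hA j]
      simp only [Algebra.smul_def, map_mul, map_natCast]
      have h1 : algebraMap ℚ S (((p ^ M - j).choose (i - j) : ℚ) *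
          ∏ m ∈ Finset.range j, (((p : ℚ) ^ M - m) / ((p : ℚ) ^ L - m))) =
          algebraMap ℚ S (((p ^ L - j).choose (i - j) : ℚ) *
          ∏ m ∈ Finset.range i, (((p : ℚ) ^ M - m) / ((p : ℚ) ^ L - m))) :=
        congrArg _ hkey
      rw [map_mul, map_mul, map_natCast, map_natCast] at h1
      linear_combination (z ^ (i - j) * x ^ j * a j) * h1
    refine ⟨hsum, ?_⟩
    rw [hsum]
    obtain ⟨c, hc⟩ := Ideal.mem_span_singleton'.mp (hcond i hi)
    refine Ideal.mem_span_singleton'.mpr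
      ⟨((p : ℚ) ^ (M - L) * (((p : ℚ) ^ (M - L))⁻¹ * ∏ m ∈ Finset.range i, f m)) • c, ?_⟩
    rw [smul_mul_assoc, hc]
end

section
/- Let p be a prime and let d, i, M, L be integers with L ≤ M and 0 < d < i ≤ p^L. Let S be a commutative integral domain containing the rational numbers and let x, y, z, a_0, a_1, …, a_{i−1} ∈ S satisfy Σ_{m=0}^h C(p^L−m, h−m)·a_m·z^{h−m}·x^m ∈ y^h·S for every integer h < i. Define ã_j = 0 for j < d and ã_j = y^d·C(p^L−j+d, i−j)·a_{j−d}/C(p^M−j, i−j) for d ≤ j ≤ i−1 (the binomial coefficients C(p^M−j, i−j) are nonzero integers, hence invertible in S). Then Σ_{j=0}^k C(p^M−j, k−j)·ã_j·z^{k−j}·x^j ∈ y^k·S for all k < i. -/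
lemma key_ratio (A B d m k i : ℕ) (hmk : d + m ≤ k) (hki : k < i) (hiB : i ≤ B) (hBA : B ≤ A) :
    ((A - (d + m)).choose (k - (d + m)) : ℚ) *
      (((B - (d + m) + d).choose (i - (d + m)) : ℚ) / ((A - (d + m)).choose (i - (d + m)) : ℚ))
    = (((B - k + d).choose (i - k) : ℚ) / ((A - k).choose (i - k) : ℚ)) *
      ((B - m).choose (k - (d + m)) : ℚ) := by
  set j := d + m with hj
  have hBm : B - j + d = B - m := by omega
  rw [hBm]
  have hA1 : ((A - j).choose (i - j) : ℚ) ≠ 0 := by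
    exact_mod_cast (Nat.choose_pos (by omega)).ne'
  have hA2 : ((A - k).choose (i - k) : ℚ) ≠ 0 := by
    exact_mod_cast (Nat.choose_pos (by omega)).ne'
  have h1 := Nat.choose_mul (n := A - j) (k := i - j) (s := k - j) (by omega)
  have h2 := Nat.choose_mul (n := B - m) (k := i - j) (s := k - j) (by omega)
  have e1 : A - j - (k - j) = A - k := by omega
  have e2 : i - j - (k - j) = i - k := by omega
  have e3 : B - m - (k - j) = B - k + d := by omega
  rw [e1, e2] at h1
  rw [e3, e2] at h2
  have hc : ((i - j).choose (k - j) : ℚ) ≠ 0 := by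
    exact_mod_cast (Nat.choose_pos (by omega)).ne'
  have h1' : ((A - j).choose (i - j) : ℚ) * ((i - j).choose (k - j) : ℚ)
      = ((A - j).choose (k - j) : ℚ) * ((A - k).choose (i - k) : ℚ) := by exact_mod_cast h1
  have h2' : ((B - m).choose (i - j) : ℚ) * ((i - j).choose (k - j) : ℚ)
      = ((B - m).choose (k - j) : ℚ) * ((B - k + d).choose (i - k) : ℚ) := by exact_mod_cast h2
  field_simp
  apply mul_left_cancel₀ hc
  linear_combination (-(((i - j).choose (k - j) : ℚ)) * (((B - m).choose (i - j) : ℚ))) * h1'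
    + ((((i - j).choose (k - j) : ℚ)) * (((A - j).choose (i - j) : ℚ))) * h2'

/-- Lemma 2.6. Shifting and rescaling coefficients: with
`ãⱼ = y^d·C(p^L-j+d, i-j)·a_(j-d)/C(p^M-j, i-j)` for `d ≤ j ≤ i-1` and `ãⱼ = 0` for
`j < d`, the sums `Σⱼ C(p^M-j, k-j) ãⱼ z^(k-j) xʲ` lie in `yᵏS` for all `k < i`. -/
theorem shift_rescale_coefficients {S : Type*} [CommRing S] [IsDomain S] [Algebra ℚ S]
    (p : ℕ) (hp : p.Prime) (d i L M : ℕ) (hLM : L ≤ M)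
    (hd : 0 < d) (hdi : d < i) (hiL : i ≤ p ^ L)
    (x y z : S) (a : ℕ → S)
    (hcond : ∀ h, h < i →
      (∑ m ∈ Finset.range (h + 1),
        (Nat.choose (p ^ L - m) (h - m) : S) * a m * z ^ (h - m) * x ^ m) ∈
        Ideal.span {y ^ h})
    (atil : ℕ → S)
    (hatil1 : ∀ j, j < d → atil j = 0)
    (hatil2 : ∀ j, d ≤ j → j ≤ i - 1 →
      atil j = ((Nat.choose (p ^ L - j + d) (i - j) : ℚ) /
        (Nat.choose (p ^ M - j) (i - j) : ℚ)) • (y ^ d * a (j - d))) :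
    ∀ k, k < i →
      (∑ j ∈ Finset.range (k + 1),
        (Nat.choose (p ^ M - j) (k - j) : S) * atil j * z ^ (k - j) * x ^ j) ∈
        Ideal.span {y ^ k} := by
  intro k hk
  have hBA : p ^ L ≤ p ^ M := Nat.pow_le_pow_right hp.pos hLM
  by_cases hkd : k < d
  · rw [Finset.sum_eq_zero]
    · exact zero_mem _
    · intro j hj
      rw [hatil1 j (by simp at hj; omega)]
      ring
  · push_neg at hkd
    -- rewrite the sum
    set q : ℚ := ((p ^ L - k + d).choose (i - k) : ℚ) / ((p ^ M - k).choose (i - k) : ℚ) with hq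
    have hsum : (∑ j ∈ Finset.range (k + 1),
        (Nat.choose (p ^ M - j) (k - j) : S) * atil j * z ^ (k - j) * x ^ j)
        = q • (x ^ d * y ^ d * ∑ m ∈ Finset.range (k - d + 1),
            (Nat.choose (p ^ L - m) (k - d - m) : S) * a m * z ^ (k - d - m) * x ^ m) := by
      have h0 : (∑ j ∈ Finset.range (k + 1),
          (Nat.choose (p ^ M - j) (k - j) : S) * atil j * z ^ (k - j) * x ^ j)
          = ∑ j ∈ Finset.Ico d (k + 1),
          (Nat.choose (p ^ M - j) (k - j) : S) * atil j * z ^ (k - j) * x ^ j := by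
        refine (Finset.sum_subset ?_ ?_).symm
        · intro j hj
          simp only [Finset.mem_Ico] at hj
          simp only [Finset.mem_range]
          omega
        · intro j hj hj2
          rw [hatil1 j (by simp only [Finset.mem_Ico] at hj2; simp only [Finset.mem_range] at hj; omega)]
          ring
      rw [h0, Finset.sum_Ico_eq_sum_range]
      have hrange : k + 1 - d = k - d + 1 := by omega
      rw [hrange, Finset.mul_sum, Finset.smul_sum]
      apply Finset.sum_congr rfl
      intro m hm
      simp only [Finset.mem_range] at hm
      have hmk : d + m ≤ k := by omega
      rw [hatil2 (d + m) (by omega) (by omega)]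
      have hdel : d + m - d = m := by omega
      rw [hdel]
      have hkey := key_ratio (p ^ M) (p ^ L) d m k i hmk hk hiL hBA
      have hkey' : (algebraMap ℚ S) (((p ^ M - (d + m)).choose (k - (d + m)) : ℚ) *
          (((p ^ L - (d + m) + d).choose (i - (d + m)) : ℚ) /
            ((p ^ M - (d + m)).choose (i - (d + m)) : ℚ)))
          = (algebraMap ℚ S) (q * ((p ^ L - m).choose (k - (d + m)) : ℚ)) := by
        rw [hkey, hq]
      rw [map_mul, map_mul] at hkey'
      have he : k - d - m = k - (d + m) := by omega
      rw [he]
      simp only [Algebra.smul_def]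
      have hnatM : ((Nat.choose (p ^ M - (d + m)) (k - (d + m)) : S)) =
          (algebraMap ℚ S) (((p ^ M - (d + m)).choose (k - (d + m)) : ℚ)) := by
        simp
      have hnatL : ((Nat.choose (p ^ L - m) (k - (d + m)) : S)) =
          (algebraMap ℚ S) (((p ^ L - m).choose (k - (d + m)) : ℚ)) := by
        simp
      rw [hnatM, hnatL]
      linear_combination (y ^ d * a m * z ^ (k - (d + m)) * x ^ (d + m)) * hkey'
    rw [hsum]
    obtain ⟨s, hs⟩ := Ideal.mem_span_singleton'.mp (hcond (k - d) (by omega))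
    rw [← hs]
    apply Ideal.mem_span_singleton'.mpr
    refine ⟨q • (x ^ d * s), ?_⟩
    have hy : y ^ d * y ^ (k - d) = y ^ k := by
      rw [← pow_add]
      congr 1
      omega
    rw [smul_mul_assoc]
    congr 1
    linear_combination (-(x ^ d * s)) * hy
end
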